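/- Let G be a game in G_single with Σ_j p_j ≤ T. For every tie-breaking rule M, every Nash equilibrium σ with respect to M, and every two distinct jobs a and b that are not covered under M(σ), it holds that w_a + w_b ≤ val(σ). -/

import Mathlib

open Classical

/-- An interval scheduling game: jobs `Fin n`, colors `Fin c`, horizon `[0, T)`,
and for each job a color, a length and a weight. -/
structure Game where
  n : ℕ
  c : ℕ
  T : ℝ
  T_pos : 0 < T
  color : Fin n → Fin c
  len : Fin n → ℝ
  wt : Fin n → ℝ
  len_nonneg : ∀ j, 0 ≤ len j
  len_le_T : ∀ j, len j ≤ T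
  wt_nonneg : ∀ j, 0 ≤ wt j

/-- A strategy profile assigns a feasible start time to every job, so that job `j`
occupies `[start j, start j + len j) ⊆ [0, T)`. -/
structure Game.Profile (G : Game) where
  start : Fin G.n → ℝ
  start_nonneg : ∀ j, 0 ≤ start j
  start_le : ∀ j, start j + G.len j ≤ G.T

/-- A machine configuration assigns a color to every time point. -/
abbrev Game.Config (G : Game) : Type := ℝ → Fin G.c

/-- Job `j` is covered if the machine is configured to its color throughout its
processing interval `[start j, start j + len j)`. -/
def Game.Covered (G : Game) (s : G.Profile) (γ : G.Config) (j : Fin G.n) : Prop :=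
  ∀ t : ℝ, s.start j ≤ t → t < s.start j + G.len j → γ t = G.color j

/-- The profit of a configuration: total weight of covered jobs. -/
noncomputable def Game.profit (G : Game) (s : G.Profile) (γ : G.Config) : ℝ :=
  ∑ j : Fin G.n, if G.Covered s γ j then G.wt j else 0

/-- The value of a profile: the maximal profit over machine configurations. -/
noncomputable def Game.val (G : Game) (s : G.Profile) : ℝ :=
  sSup {x : ℝ | ∃ γ : G.Config, x = G.profit s γ}

/-- The social optimum value: the maximal value over strategy profiles. -/
noncomputable def Game.valOPT (G : Game) : ℝ :=
  sSup {x : ℝ | ∃ s : G.Profile, x = G.val s}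

/-- A tie-breaking rule selects, for every profile, a configuration of maximal profit. -/
structure Game.TieBreak (G : Game) where
  choice : G.Profile → G.Config
  choice_opt : ∀ s : G.Profile, G.profit s (choice s) = G.val s

/-- Utility of player `i` under tie-breaking rule `M`: total weight of covered jobs
of color `i`. -/
noncomputable def Game.utility (G : Game) (M : G.TieBreak) (i : Fin G.c) (s : G.Profile) : ℝ :=
  ∑ j : Fin G.n, if G.color j = i ∧ G.Covered s (M.choice s) j then G.wt j else 0

/-- Nash equilibrium with respect to tie-breaking rule `M`: no player can strictly
increase its utility by relocating only the jobs of its own color. -/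
def Game.IsNE (G : Game) (M : G.TieBreak) (s : G.Profile) : Prop :=
  ∀ (i : Fin G.c) (s' : G.Profile),
    (∀ j, G.color j ≠ i → s'.start j = s.start j) →
      G.utility M i s' ≤ G.utility M i s

/-- The class `G_single`: exactly one job of each color (`n = c`). -/
def Game.Single (G : Game) : Prop := Function.Bijective G.color

lemma profit_le_val (G : Game) (s : G.Profile) (γ : G.Config) :
    G.profit s γ ≤ G.val s := by
  apply le_csSup
  · refine ⟨∑ j, G.wt j, ?_⟩
    rintro x ⟨γ', rfl⟩
    apply Finset.sum_le_sum
    intro j _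
    split
    · exact le_rfl
    · exact G.wt_nonneg j
  · exact ⟨γ, rfl⟩

lemma ite_add_ite_le {P Q : Prop} {w : ℝ} (hw : 0 ≤ w) (h : ¬(P ∧ Q)) :
    (if P then w else 0) + (if Q then w else 0) ≤ w := by
  by_cases hP : P <;> by_cases hQ : Q <;> simp [hP, hQ, hw]
  exact absurd ⟨hP, hQ⟩ h

lemma key (G : Game) (hsingle : G.Single)
    (M : G.TieBreak) (s : G.Profile) (hNE : G.IsNE M s)
    (a : Fin G.n) (ha : ¬ G.Covered s (M.choice s) a)
    (x : ℝ) (hx0 : 0 ≤ x) (hxT : x + G.len a ≤ G.T) :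
    G.wt a ≤ ∑ j, if G.Covered s (M.choice s) j ∧
        (∃ t, s.start j ≤ t ∧ t < s.start j + G.len j ∧ x ≤ t ∧ t < x + G.len a)
      then G.wt j else 0 := by
  set γ0 := M.choice s with hγ0
  set Hit : Fin G.n → Prop := fun j =>
    ∃ t, s.start j ≤ t ∧ t < s.start j + G.len j ∧ x ≤ t ∧ t < x + G.len a with hHit
  rcases eq_or_lt_of_le (G.wt_nonneg a) with hwa | hwa
  · rw [← hwa]
    apply Finset.sum_nonneg
    intro j _
    split
    · exact G.wt_nonneg j
    · exact le_rfl
  -- the deviated profile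
  · set s' : G.Profile :=
      { start := fun j => if j = a then x else s.start j
        start_nonneg := by
          intro j; split
          · exact hx0
          · exact s.start_nonneg j
        start_le := by
          intro j; split
          · next h => subst h; exact hxT
          · exact s.start_le j } with hs'
    have inj := hsingle.injective
    have hdev : ∀ j, G.color j ≠ G.color a → s'.start j = s.start j := by
      intro j hj
      have : j ≠ a := fun h => hj (by rw [h])
      simp [hs', this]
    have hne := hNE (G.color a) s' hdev
    have hu_s : G.utility M (G.color a) s = 0 := by
      apply Finset.sum_eq_zero
      intro j _
      rw [if_neg]
      rintro ⟨h1, h2⟩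
      exact ha ((inj h1) ▸ h2)
    have hu_s' : G.utility M (G.color a) s' =
        if G.Covered s' (M.choice s') a then G.wt a else 0 := by
      unfold Game.utility
      rw [Finset.sum_eq_single a]
      · simp
      · intro j _ hj
        rw [if_neg]
        rintro ⟨h1, _⟩
        exact hj (inj h1)
      · intro h; exact absurd (Finset.mem_univ a) h
    have hnc : ¬ G.Covered s' (M.choice s') a := by
      intro h
      rw [hu_s, hu_s', if_pos h] at hne
      linarith
    -- val s' ≤ val s
    have h1 : G.val s' ≤ G.val s := by
      rw [← M.choice_opt s']
      refine le_trans ?_ (profit_le_val G s (M.choice s'))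
      apply Finset.sum_le_sum
      intro j _
      by_cases hj : j = a
      · subst hj
        rw [if_neg hnc]
        split
        · exact G.wt_nonneg _
        · exact le_rfl
      · have hstart : s'.start j = s.start j := by simp [hs', hj]
        have : G.Covered s' (M.choice s') j ↔ G.Covered s (M.choice s') j := by
          unfold Game.Covered; rw [hstart]
        rw [this]
    -- val s' ≥ wt a + (weight of covered jobs missing the interval)
    set γ' : G.Config := fun t => if x ≤ t ∧ t < x + G.len a then G.color a else γ0 t with hγ'
    have hcovA : G.Covered s' γ' a := by
      intro t ht1 ht2
      have hsa : s'.start a = x := by simp [hs']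
      rw [hsa] at ht1 ht2
      simp [hγ', ht1, ht2]
    have h2 : G.wt a + (∑ j, if G.Covered s γ0 j ∧ ¬ Hit j then G.wt j else 0)
        ≤ G.profit s' γ' := by
      unfold Game.profit
      rw [← Finset.add_sum_erase _ _ (Finset.mem_univ a),
          ← Finset.add_sum_erase _ _ (Finset.mem_univ a)]
      have hga : (if G.Covered s γ0 a ∧ ¬ Hit a then G.wt a else 0) = 0 := by
        rw [if_neg]; rintro ⟨h, _⟩; exact ha h
      rw [hga, if_pos hcovA]
      rw [zero_add]
      apply add_le_add le_rfl
      apply Finset.sum_le_sum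
      intro j hj
      have hj' : j ≠ a := Finset.ne_of_mem_erase hj
      split
      · next h =>
        rw [if_pos]
        intro t ht1 ht2
        have hstart : s'.start j = s.start j := by simp [hs', hj']
        rw [hstart] at ht1 ht2
        have hnotin : ¬ (x ≤ t ∧ t < x + G.len a) := by
          intro hcon
          exact h.2 ⟨t, ht1, ht2, hcon.1, hcon.2⟩
        simp only [hγ', if_neg hnotin]
        exact h.1 t ht1 ht2
      · split
        · exact G.wt_nonneg j
        · exact le_rfl
    have h3 : G.profit s' γ' ≤ G.val s' := profit_le_val G s' γ'
    have h4 : G.val s = (∑ j, if G.Covered s γ0 j ∧ ¬ Hit j then G.wt j else 0)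
        + (∑ j, if G.Covered s γ0 j ∧ Hit j then G.wt j else 0) := by
      rw [← M.choice_opt s, ← hγ0]
      unfold Game.profit
      rw [← Finset.sum_add_distrib]
      apply Finset.sum_congr rfl
      intro j _
      by_cases hC : G.Covered s γ0 j <;> by_cases hH : Hit j <;> simp [hC, hH]
    linarith

/-- In a game in `G_single` in which all jobs fit together in `[0, T)`, any two
distinct non-covered jobs of a Nash equilibrium have total weight at most the
equilibrium value. -/
theorem single_NE_uncovered_pair_bound (G : Game) (hsingle : G.Single)
    (hp : (∑ j, G.len j) ≤ G.T)
    (M : G.TieBreak) (s : G.Profile) (hNE : G.IsNE M s)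
    (a b : Fin G.n) (hab : a ≠ b)
    (ha : ¬ G.Covered s (M.choice s) a) (hb : ¬ G.Covered s (M.choice s) b) :
    G.wt a + G.wt b ≤ G.val s := by
  have hla : G.len a ≤ G.T := G.len_le_T a
  have hlb : G.len b ≤ G.T := G.len_le_T b
  have hA := key G hsingle M s hNE a ha 0 le_rfl (by linarith)
  have hB := key G hsingle M s hNE b hb (G.T - G.len b) (by linarith) (by linarith)
  have hsum : (∑ j, if G.Covered s (M.choice s) j ∧
        (∃ t, s.start j ≤ t ∧ t < s.start j + G.len j ∧ (0:ℝ) ≤ t ∧ t < 0 + G.len a)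
      then G.wt j else 0)
      + (∑ j, if G.Covered s (M.choice s) j ∧
        (∃ t, s.start j ≤ t ∧ t < s.start j + G.len j ∧ G.T - G.len b ≤ t ∧
          t < G.T - G.len b + G.len b)
      then G.wt j else 0) ≤ G.val s := by
    rw [← M.choice_opt s]
    unfold Game.profit
    rw [← Finset.sum_add_distrib]
    apply Finset.sum_le_sum
    intro j _
    by_cases hC : G.Covered s (M.choice s) j
    · rw [if_pos hC]
      simp only [hC, true_and]
      apply ite_add_ite_le (G.wt_nonneg j)
      rintro ⟨⟨t, ht1, ht2, _, ht4⟩, ⟨u, hu1, hu2, hu3, _⟩⟩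
      have hja : j ≠ a := fun h => ha (h ▸ hC)
      have hjb : j ≠ b := fun h => hb (h ▸ hC)
      have hsub : ({a, b, j} : Finset (Fin G.n)) ⊆ Finset.univ := Finset.subset_univ _
      have hsum3 : G.len a + G.len b + G.len j ≤ ∑ k, G.len k := by
        have h5 : ∑ k ∈ ({a, b, j} : Finset (Fin G.n)), G.len k ≤ ∑ k, G.len k :=
          Finset.sum_le_sum_of_subset_of_nonneg hsub (fun k _ _ => G.len_nonneg k)
        have h6 : ∑ k ∈ ({a, b, j} : Finset (Fin G.n)), G.len k
            = G.len a + G.len b + G.len j := by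
          rw [Finset.sum_insert (by simp [hab, hja.symm]),
              Finset.sum_insert (by simp [hjb.symm]), Finset.sum_singleton]
          ring
        linarith
      linarith
    · simp [hC]
  linarith
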